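/- If a finite Abelian group G inducing a pentagonal quasigroup has an element of order k > 1, then G has at least four elements of order k. -/
import Mathlib


/-- An Abelian group induces a pentagonal quasigroup if it has a regular
automorphism φ with φ⁴ - φ³ + φ² - φ + id = 0. -/
def InducesPentagonal (G : Type*) [AddCommGroup G] : Prop :=
  ∃ φ : G →+ G,
    Function.Bijective φ ∧
    (∀ x, φ x = x → x = 0) ∧
    (∀ x, φ (φ (φ (φ x))) - φ (φ (φ x)) + φ (φ x) - φ x + x = 0)

theorem four_elements_of_order (G : Type*) [AddCommGroup G] [Fintype G]
    (h : InducesPentagonal G) (k : ℕ) (hk : 1 < k) (x : G) (hx : addOrderOf x = k) :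
    4 ≤ Nat.card {y : G // addOrderOf y = k} := by
  classical
  obtain ⟨φ, hbij, hfix, hpent⟩ := h
  have hinj := hbij.injective
  have hordφ : ∀ y : G, addOrderOf (φ y) = addOrderOf y :=
    fun y => addOrderOf_injective φ hinj y
  have hx0 : x ≠ 0 := by
    intro h0; rw [h0, addOrderOf_zero] at hx; omega
  rw [Nat.card_eq_fintype_card, Fintype.card_subtype]
  by_cases h2 : φ (φ x) = x
  · -- Case φ² x = x : then 5x = 0, k = 5, use x, 2x, 3x, 4x
    have h3 : φ (φ (φ x)) = φ x := by rw [h2]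
    have h4 : φ (φ (φ (φ x))) = x := by rw [h3, h2]
    have e1 := hpent x
    rw [h4, h3, h2] at e1
    -- e1 : x - φ x + x - φ x + x = 0
    have e2 := hpent (φ x)
    rw [h4, h3, h2] at e2
    -- e2 : φ x - x + φ x - x + φ x = 0
    have hsum : x + φ x = 0 := by
      have s : (x - φ x + x - φ x + x) + (φ x - x + φ x - x + φ x) = 0 := by
        rw [e1, e2, add_zero]
      calc x + φ x = (x - φ x + x - φ x + x) + (φ x - x + φ x - x + φ x) := by abel
        _ = 0 := s
    have hb : φ x = -x := by
      have := neg_eq_of_add_eq_zero_right hsum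
      exact this.symm
    rw [hb] at e1
    have h5 : (5 : ℕ) • x = 0 := by
      calc (5 : ℕ) • x = x - -x + x - -x + x := by abel
        _ = 0 := e1
    have hk5 : k ∣ 5 := by rw [← hx]; exact addOrderOf_dvd_of_nsmul_eq_zero h5
    have hkeq : k = 5 := by
      rcases (by norm_num : Nat.Prime 5).eq_one_or_self_of_dvd k hk5 with h' | h'
      · omega
      · exact h'
    have hne : ∀ c : ℕ, 0 < c → c < 5 → c • x ≠ 0 := by
      intro c hc1 hc2 hc
      have := addOrderOf_dvd_of_nsmul_eq_zero hc
      rw [hx, hkeq] at this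
      have := Nat.le_of_dvd hc1 this
      omega
    have hdist : ∀ a b : ℕ, a < b → b ≤ 4 → a • x ≠ b • x := by
      intro a b hab hb4 he
      apply hne (b - a) (by omega) (by omega)
      have hsum' : (b - a) • x + a • x = b • x := by
        rw [← add_nsmul]; congr 1; omega
      rw [← he] at hsum'
      have : (b - a) • x + a • x = 0 + a • x := by rw [hsum', zero_add]
      exact add_right_cancel this
    have hordc : ∀ c : ℕ, 0 < c → c < 5 → addOrderOf (c • x) = k := by
      intro c hc1 hc2
      have h5c : (5 : ℕ) • (c • x) = 0 := by
        rw [smul_comm, h5, smul_zero]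
      have hdvd := addOrderOf_dvd_of_nsmul_eq_zero h5c
      rcases (by norm_num : Nat.Prime 5).eq_one_or_self_of_dvd _ hdvd with h' | h'
      · exfalso
        exact hne c hc1 hc2 (AddMonoid.addOrderOf_eq_one_iff.mp h')
      · rw [h', hkeq]
    have d12 : x ≠ (2 : ℕ) • x := by
      have := hdist 1 2 (by omega) (by omega); simpa [one_nsmul] using this
    have d13 : x ≠ (3 : ℕ) • x := by
      have := hdist 1 3 (by omega) (by omega); simpa [one_nsmul] using this
    have d14 : x ≠ (4 : ℕ) • x := by
      have := hdist 1 4 (by omega) (by omega); simpa [one_nsmul] using this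
    have d23 : (2 : ℕ) • x ≠ (3 : ℕ) • x := hdist 2 3 (by omega) (by omega)
    have d24 : (2 : ℕ) • x ≠ (4 : ℕ) • x := hdist 2 4 (by omega) (by omega)
    have d34 : (3 : ℕ) • x ≠ (4 : ℕ) • x := hdist 3 4 (by omega) (by omega)
    have hsub : ({x, (2:ℕ) • x, (3:ℕ) • x, (4:ℕ) • x} : Finset G) ⊆
        Finset.univ.filter (fun y => addOrderOf y = k) := by
      intro y hy
      simp only [Finset.mem_insert, Finset.mem_singleton] at hy
      rw [Finset.mem_filter]
      refine ⟨Finset.mem_univ _, ?_⟩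
      rcases hy with rfl | rfl | rfl | rfl
      · exact hx
      · exact hordc 2 (by omega) (by omega)
      · exact hordc 3 (by omega) (by omega)
      · exact hordc 4 (by omega) (by omega)
    have hcard : ({x, (2:ℕ) • x, (3:ℕ) • x, (4:ℕ) • x} : Finset G).card = 4 := by
      rw [Finset.card_insert_of_notMem (by simp [d12, d13, d14]),
          Finset.card_insert_of_notMem (by simp [d23, d24]),
          Finset.card_insert_of_notMem (by simp [d34]),
          Finset.card_singleton]
    calc 4 = ({x, (2:ℕ) • x, (3:ℕ) • x, (4:ℕ) • x} : Finset G).card := hcard.symm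
      _ ≤ _ := Finset.card_le_card hsub
  · -- Case φ² x ≠ x : use x, φ x, φ² x, φ³ x
    have h3 : φ (φ (φ x)) ≠ x := by
      intro h3'
      have e := hpent x
      rw [h3'] at e
      -- e : φ x - x + φ (φ x) - φ x + x = 0
      have : φ (φ x) = 0 := by
        calc φ (φ x) = φ x - x + φ (φ x) - φ x + x := by abel
          _ = 0 := e
      apply hx0
      have h0 : φ (φ x) = φ (φ 0) := by rw [map_zero, map_zero, this]
      exact hinj (hinj h0)
    have d01 : x ≠ φ x := fun e => hx0 (hfix x e.symm)
    have d02 : x ≠ φ (φ x) := fun e => h2 e.symm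
    have d03 : x ≠ φ (φ (φ x)) := fun e => h3 e.symm
    have d12 : φ x ≠ φ (φ x) := fun e => d01 (hinj e)
    have d13 : φ x ≠ φ (φ (φ x)) := fun e => d02 (hinj e)
    have d23 : φ (φ x) ≠ φ (φ (φ x)) := fun e => d12 (hinj e)
    have hsub : ({x, φ x, φ (φ x), φ (φ (φ x))} : Finset G) ⊆
        Finset.univ.filter (fun y => addOrderOf y = k) := by
      intro y hy
      simp only [Finset.mem_insert, Finset.mem_singleton] at hy
      rw [Finset.mem_filter]
      refine ⟨Finset.mem_univ _, ?_⟩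
      rcases hy with rfl | rfl | rfl | rfl
      · exact hx
      · rw [hordφ, hx]
      · rw [hordφ, hordφ, hx]
      · rw [hordφ, hordφ, hordφ, hx]
    have hcard : ({x, φ x, φ (φ x), φ (φ (φ x))} : Finset G).card = 4 := by
      rw [Finset.card_insert_of_notMem (by simp [d01, d02, d03]),
          Finset.card_insert_of_notMem (by simp [d12, d13]),
          Finset.card_insert_of_notMem (by simp [d23]),
          Finset.card_singleton]
    calc 4 = ({x, φ x, φ (φ x), φ (φ (φ x))} : Finset G).card := hcard.symm
      _ ≤ _ := Finset.card_le_card hsub
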